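/- (Fundamental Theorem of Zeon Algebra, spectrally simple case) Let φ(u) be a monic polynomial over CZ_n and let f(u) be the complex polynomial obtained by taking scalar parts of the coefficients of φ. If λ_0 ∈ ℂ is a simple zero of f, then there exists a unique λ ∈ CZ_n with ⟨λ⟩_0 = λ_0 and φ(λ) = 0; moreover λ is a simple zero of φ, i.e., φ(u) = (u − λ)q(u) with q(λ) invertible. -/

import Mathlib

noncomputable section

/-- The ideal of squares of generators defining the zeon algebra. -/
def zeonIdeal (n : ℕ) : Ideal (MvPolynomial (Fin n) ℂ) :=
  Ideal.span (Set.range fun i : Fin n => (MvPolynomial.X i : MvPolynomial (Fin n) ℂ) ^ 2)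

/-- The `n`-particle complex zeon algebra `CZ_n`. -/
abbrev Zeon (n : ℕ) := MvPolynomial (Fin n) ℂ ⧸ zeonIdeal n

/-- The scalar part `⟨u⟩₀` of a zeon, as a `ℂ`-algebra homomorphism. -/
def scalarPart (n : ℕ) : Zeon n →ₐ[ℂ] ℂ :=
  Ideal.Quotient.liftₐ (zeonIdeal n) (MvPolynomial.aeval fun _ => (0 : ℂ)) (by
    intro a ha
    have h : zeonIdeal n ≤ RingHom.ker
        (MvPolynomial.aeval (R := ℂ) fun _ : Fin n => (0 : ℂ)).toRingHom := by
      rw [zeonIdeal, Ideal.span_le]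
      rintro _ ⟨i, rfl⟩
      simp [RingHom.mem_ker]
    exact h ha)

/-- The dual (nilpotent) part `Du = u - ⟨u⟩₀`. -/
def dualPart (n : ℕ) (u : Zeon n) : Zeon n := u - algebraMap ℂ (Zeon n) (scalarPart n u)

/-- The generator `ζ_i`. -/
def zeta (n : ℕ) (i : Fin n) : Zeon n := Ideal.Quotient.mk _ (MvPolynomial.X i)

/-- The basis blade `ζ_I`. -/
def blade (n : ℕ) (I : Finset (Fin n)) : Zeon n :=
  Ideal.Quotient.mk _ (∏ i ∈ I, MvPolynomial.X i)

-- Auxiliary lemmas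

lemma monomial_mem_zeonIdeal {n : ℕ} (m : Fin n →₀ ℕ) (i : Fin n) (h2 : 2 ≤ m i) (c : ℂ) :
    MvPolynomial.monomial m c ∈ zeonIdeal n := by
  have hle : Finsupp.single i 2 ≤ m := Finsupp.single_le_iff.mpr h2
  have : MvPolynomial.monomial m c
      = (MvPolynomial.X (R := ℂ) i) ^ 2 * MvPolynomial.monomial (m - Finsupp.single i 2) c := by
    rw [MvPolynomial.X_pow_eq_monomial, MvPolynomial.monomial_mul, one_mul,
      add_tsub_cancel_of_le hle]
  rw [this]
  exact Ideal.mul_mem_right _ _ (Ideal.subset_span ⟨i, rfl⟩)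

lemma deg_le_of_mem_support_pow {n : ℕ} {p : MvPolynomial (Fin n) ℂ}
    (hp : MvPolynomial.constantCoeff p = 0) (k : ℕ) :
    ∀ m ∈ (p ^ k).support, k ≤ ∑ i, m i := by
  classical
  induction k with
  | zero =>
    intro m _; exact Nat.zero_le _
  | succ k ih =>
    intro m hm
    rw [pow_succ] at hm
    have := MvPolynomial.support_mul _ _ hm
    rw [Finset.mem_add] at this
    obtain ⟨a, ha, b, hb, rfl⟩ := this
    have hb0 : b ≠ 0 := by
      rintro rfl
      exact (MvPolynomial.mem_support_iff.mp hb) hp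
    have hb1 : 1 ≤ ∑ i, b i := by
      by_contra h
      push_neg at h
      apply hb0
      ext i
      have : ∑ i, b i = 0 := Nat.lt_one_iff.mp h
      have := Finset.sum_eq_zero_iff.mp this i (Finset.mem_univ i)
      simpa using this
    calc k + 1 ≤ (∑ i, a i) + (∑ i, b i) := Nat.add_le_add (ih a ha) hb1
    _ = ∑ i, (a + b) i := by rw [← Finset.sum_add_distrib]; rfl

lemma pow_mem_zeonIdeal {n : ℕ} {p : MvPolynomial (Fin n) ℂ}
    (hp : MvPolynomial.constantCoeff p = 0) : p ^ (n + 1) ∈ zeonIdeal n := by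
  classical
  have h := deg_le_of_mem_support_pow hp (n + 1)
  rw [MvPolynomial.as_sum (p ^ (n + 1))]
  refine Ideal.sum_mem _ fun m hm => ?_
  have hdeg := h m hm
  have : ∃ i, 2 ≤ m i := by
    by_contra hc
    push_neg at hc
    have : ∑ i, m i ≤ ∑ _i : Fin n, 1 :=
      Finset.sum_le_sum fun i _ => Nat.lt_succ_iff.mp (hc i)
    simp only [Finset.sum_const, Finset.card_univ, Fintype.card_fin, smul_eq_mul, mul_one] at this
    omega
  obtain ⟨i, hi⟩ := this
  exact monomial_mem_zeonIdeal m i hi _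

lemma scalarPart_mk {n : ℕ} (p : MvPolynomial (Fin n) ℂ) :
    scalarPart n (Ideal.Quotient.mk _ p) = MvPolynomial.constantCoeff p := by
  show (MvPolynomial.aeval fun _ => (0 : ℂ)) p = _
  simp

lemma isNilpotent_of_scalarPart_eq_zero {n : ℕ} {u : Zeon n} (h : scalarPart n u = 0) :
    IsNilpotent u := by
  obtain ⟨p, rfl⟩ := Ideal.Quotient.mk_surjective u
  rw [scalarPart_mk] at h
  refine ⟨n + 1, ?_⟩
  rw [← map_pow, Ideal.Quotient.eq_zero_iff_mem]
  exact pow_mem_zeonIdeal h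

lemma isUnit_of_scalarPart_ne_zero {n : ℕ} {u : Zeon n} (h : scalarPart n u ≠ 0) :
    IsUnit u := by
  have hd : IsNilpotent (dualPart n u) := by
    apply isNilpotent_of_scalarPart_eq_zero
    simp [dualPart, map_sub]
  have hu : IsUnit (algebraMap ℂ (Zeon n) (scalarPart n u)) :=
    (IsUnit.mk0 _ h).map (algebraMap ℂ (Zeon n))
  have : u = algebraMap ℂ (Zeon n) (scalarPart n u) + dualPart n u := by
    simp [dualPart]
  rw [this]
  exact IsNilpotent.isUnit_add_left_of_commute hd hu (Commute.all _ _)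

lemma scalarPart_eval {n : ℕ} (φ : Polynomial (Zeon n)) (u : Zeon n) :
    scalarPart n (φ.eval u)
      = (φ.map (scalarPart n).toRingHom).eval (scalarPart n u) := by
  rw [Polynomial.eval_map]
  exact (Polynomial.eval₂_at_apply (scalarPart n).toRingHom u).symm

/-- Fundamental Theorem of Zeon Algebra (spectrally simple case). -/
theorem stmt17 (n : ℕ) (φ : Polynomial (Zeon n)) (hmonic : φ.Monic) (lam0 : ℂ)
    (h0 : (φ.map (scalarPart n).toRingHom).eval lam0 = 0)
    (h1 : (φ.map (scalarPart n).toRingHom).derivative.eval lam0 ≠ 0) :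
    (∃! lam : Zeon n, scalarPart n lam = lam0 ∧ φ.eval lam = 0) ∧
    (∀ lam : Zeon n, scalarPart n lam = lam0 → φ.eval lam = 0 →
      ∃ q : Polynomial (Zeon n),
        φ = (Polynomial.X - Polynomial.C lam) * q ∧ IsUnit (q.eval lam)) := by
  set x : Zeon n := algebraMap ℂ (Zeon n) lam0 with hx
  have hsx : scalarPart n x = lam0 := by
    simp [hx, AlgHom.commutes]
  -- derivative eval is a unit at any point of scalar part lam0
  have hderiv : ∀ u : Zeon n, scalarPart n u = lam0 → IsUnit (φ.derivative.eval u) := by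
    intro u hu
    apply isUnit_of_scalarPart_ne_zero
    rw [scalarPart_eval, hu]
    rwa [Polynomial.derivative_map] at h1
  -- the equivalence between nilpotency of x - u and scalar part condition
  have hequiv : ∀ u : Zeon n, IsNilpotent (x - u) ↔ scalarPart n u = lam0 := by
    intro u
    constructor
    · intro hk
      have := (hk.map (scalarPart n)).eq_zero
      rw [map_sub, hsx, sub_eq_zero] at this
      exact this.symm
    · intro hu
      apply isNilpotent_of_scalarPart_eq_zero
      rw [map_sub, hsx, hu, sub_self]
  have hnil : IsNilpotent (Polynomial.aeval x φ) := by
    rw [Polynomial.coe_aeval_eq_eval]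
    apply isNilpotent_of_scalarPart_eq_zero
    rw [scalarPart_eval, hsx, h0]
  have hunit : IsUnit (Polynomial.aeval x φ.derivative) := by
    rw [Polynomial.coe_aeval_eq_eval]
    exact hderiv x hsx
  obtain ⟨r, ⟨hrn, hr0⟩, hru⟩ :=
    Polynomial.existsUnique_nilpotent_sub_and_aeval_eq_zero hnil hunit
  rw [Polynomial.coe_aeval_eq_eval] at hr0
  constructor
  · refine ⟨r, ⟨(hequiv r).mp hrn, hr0⟩, ?_⟩
    intro y ⟨hy1, hy2⟩
    exact hru y ⟨(hequiv y).mpr hy1, by rwa [Polynomial.coe_aeval_eq_eval]⟩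
  · intro lam hlam hroot
    obtain ⟨q, hq⟩ := Polynomial.dvd_iff_isRoot.mpr hroot
    refine ⟨q, hq, ?_⟩
    have hd : φ.derivative.eval lam = q.eval lam := by
      rw [hq]
      simp [Polynomial.derivative_mul, Polynomial.derivative_sub]
    rw [← hd]
    exact hderiv lam hlam
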